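/- Let ℓ be a prime and K a field. Suppose that for every tower of finite extensions M/L/K with [M:L] = ℓ, every symbol {a_1,...,a_q} ∈ K_q^M(L) is congruent modulo ℓ·K_q^M(L) to a norm from M whenever M = L(a^{1/ℓ}) for some a ∈ L^×. Then for every finite extension L of K, every symbol of length q+1 in K_{q+1}^M(L) lies in ℓ·K_{q+1}^M(L). -/

import Mathlib

open scoped TensorProduct

/-- The Steinberg subgroup of the `q`-fold tensor power of `Lˣ` (written additively):
generated by the tensors `x₁ ⊗ ... ⊗ x_q` with `x i + x j = 1` for some `i ≠ j`. -/
noncomputable def SteinbergRel (q : ℕ) (L : Type) [Field L] :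
    AddSubgroup (⨂[ℤ] (_ : Fin q), Additive Lˣ) :=
  AddSubgroup.closure
    {t | ∃ (u : Fin q → Lˣ) (i j : Fin q), i ≠ j ∧ (u i : L) + (u j : L) = 1 ∧
      t = PiTensorProduct.tprod ℤ (fun k => Additive.ofMul (u k))}

/-- The `q`-th Milnor K-group of a field `L`. -/
noncomputable def MilnorK (q : ℕ) (L : Type) [Field L] :=
  (⨂[ℤ] (_ : Fin q), Additive Lˣ) ⧸ SteinbergRel q L

noncomputable instance (q : ℕ) (L : Type) [Field L] : AddCommGroup (MilnorK q L) :=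
  inferInstanceAs (AddCommGroup ((⨂[ℤ] (_ : Fin q), Additive Lˣ) ⧸ SteinbergRel q L))

/-- The symbol `{u 0, ..., u (q-1)}` in the `q`-th Milnor K-group. -/
noncomputable def MilnorSymbol (q : ℕ) {L : Type} [Field L] (u : Fin q → Lˣ) :
    MilnorK q L :=
  QuotientAddGroup.mk (PiTensorProduct.tprod ℤ (fun k => Additive.ofMul (u k)))

/-- A field extension of `L`, bundled. -/
structure FieldExt (L : Type) [Field L] where
  carrier : Type
  [field : Field carrier]
  [alg : Algebra L carrier]

attribute [instance] FieldExt.field FieldExt.alg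

/-- The composite extension `F/E/K` viewed as an extension of `K`. -/
noncomputable def FieldExt.comp {K : Type} [Field K] (E : FieldExt K)
    (F : FieldExt E.carrier) : FieldExt K where
  carrier := F.carrier
  field := F.field
  alg := ((algebraMap E.carrier F.carrier).comp (algebraMap K E.carrier)).toAlgebra

-- aux lemma: multilinearity in the last slot
lemma milnorSymbol_snoc_pow (q : ℕ) {L : Type} [Field L] (as : Fin q → Lˣ)
    (v : Lˣ) (n : ℕ) :
    MilnorSymbol (q+1) (Fin.snoc as (v ^ n)) = (n : ℤ) • MilnorSymbol (q+1) (Fin.snoc as v) := by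
  unfold MilnorSymbol
  have h1 : (fun k => Additive.ofMul ((Fin.snoc as (v ^ n) : Fin (q+1) → Lˣ) k)) =
      Function.update (fun k => Additive.ofMul ((Fin.snoc as v : Fin (q+1) → Lˣ) k))
        (Fin.last q) ((n : ℤ) • Additive.ofMul v) := by
    funext k
    refine Fin.lastCases ?_ ?_ k
    · simp [ofMul_pow]
    · intro i
      rw [Function.update_of_ne (Fin.castSucc_lt_last i).ne]
      simp
  have h2 : (fun k => Additive.ofMul ((Fin.snoc as v : Fin (q+1) → Lˣ) k)) =
      Function.update (fun k => Additive.ofMul ((Fin.snoc as v : Fin (q+1) → Lˣ) k))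
        (Fin.last q) (Additive.ofMul v) := by
    funext k
    refine Fin.lastCases ?_ ?_ k
    · simp
    · intro i
      rw [Function.update_of_ne (Fin.castSucc_lt_last i).ne]
  rw [h1, MultilinearMap.map_update_smul]
  refine (QuotientAddGroup.mk_zsmul _ _ _).trans ?_
  rw [← h2]; rfl

lemma pair_pow_aux (q : ℕ) (L : Type) [Field L]
    (pairL : Lˣ → MilnorK q L →+ MilnorK (q+1) L)
    (hpairL : ∀ (u : Lˣ) (as : Fin q → Lˣ),
      pairL u (MilnorSymbol q as) = MilnorSymbol (q+1) (Fin.snoc as u))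
    (v : Lˣ) (n : ℕ) (z : MilnorK q L) :
    ∃ y, pairL (v ^ n) z = (n : ℤ) • y := by
  let H : AddSubgroup (MilnorK (q+1) L) :=
    AddMonoidHom.range (AddMonoidHom.mk' (fun x : MilnorK (q+1) L => (n : ℤ) • x)
      (fun a b => smul_add _ a b))
  suffices h : pairL (v ^ n) z ∈ H by
    obtain ⟨y, hy⟩ := h; exact ⟨y, hy.symm⟩
  obtain ⟨t, rfl⟩ := QuotientAddGroup.mk'_surjective (SteinbergRel q L) z
  induction t using PiTensorProduct.induction_on with
  | smul_tprod r f =>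
      have h1 : (QuotientAddGroup.mk' (SteinbergRel q L))
          (r • PiTensorProduct.tprod ℤ f)
          = r • MilnorSymbol q (fun k => Additive.toMul (f k)) := by
        rw [map_zsmul]; rfl
      rw [h1, map_zsmul, hpairL, milnorSymbol_snoc_pow]
      exact ⟨r • MilnorSymbol (q+1)
        (Fin.snoc (fun k => Additive.toMul (f k)) v), (smul_comm _ _ _)⟩
  | add x y hx hy =>
      convert H.add_mem hx hy using 1
      exact map_add (pairL (v ^ n)) (QuotientAddGroup.mk' (SteinbergRel q L) x)
        (QuotientAddGroup.mk' (SteinbergRel q L) y)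

/-- Key computation in Proposition 2.2(i) of the paper.  Here `Nq`/`Nq1` are the Milnor
K-theory norm maps in degrees `q` and `q+1` for towers `M/L/K` of finite extensions
(`L = E.carrier`, `M = F.carrier`), `pair` is the pairing `K_1 × K_q → K_{q+1}`
(compatible with symbols, `hpair`), and `hproj` is the projection formula.  If for every
tower `M/L/K` of finite extensions with `[M:L] = ℓ` and `M = L(a^{1/ℓ})` for some
`a ∈ L^×`, every symbol `{a_1,...,a_q} ∈ K_q^M(L)` is congruent mod `ℓ·K_q^M(L)` to a
norm from `M`, then for every finite extension `L/K`, every symbol of length `q+1` lies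
in `ℓ·K_{q+1}^M(L)`. -/
theorem stmt10 (q ℓ : ℕ) (hℓ : ℓ.Prime) (K : Type) [Field K]
    (Nq : (E : FieldExt K) → (F : FieldExt E.carrier) →
      MilnorK q F.carrier →+ MilnorK q E.carrier)
    (Nq1 : (E : FieldExt K) → (F : FieldExt E.carrier) →
      MilnorK (q + 1) F.carrier →+ MilnorK (q + 1) E.carrier)
    (pair : (L : Type) → [inst : Field L] → Lˣ → MilnorK q L →+ MilnorK (q + 1) L)
    (hpair : ∀ (L : Type) [inst : Field L] (u : Lˣ) (as : Fin q → Lˣ),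
      pair L u (MilnorSymbol q as) = MilnorSymbol (q + 1) (Fin.snoc as u))
    (hproj : ∀ (E : FieldExt K) (F : FieldExt E.carrier) (u : E.carrierˣ)
        (z : MilnorK q F.carrier),
      Nq1 E F (pair F.carrier
          (Units.map (algebraMap E.carrier F.carrier).toMonoidHom u) z)
        = pair E.carrier u (Nq E F z))
    (hyp : ∀ (E : FieldExt K), FiniteDimensional K E.carrier →
      ∀ (F : FieldExt E.carrier), FiniteDimensional E.carrier F.carrier →
      Module.finrank E.carrier F.carrier = ℓ →
      (∃ (a : E.carrierˣ) (b : F.carrier),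
        b ^ ℓ = algebraMap E.carrier F.carrier (a : E.carrier) ∧
        Algebra.adjoin E.carrier {b} = ⊤) →
      ∀ as : Fin q → E.carrierˣ,
        ∃ (z : MilnorK q F.carrier) (w : MilnorK q E.carrier),
          MilnorSymbol q as = Nq E F z + (ℓ : ℤ) • w) :
    ∀ (E : FieldExt K), FiniteDimensional K E.carrier →
      ∀ as : Fin (q + 1) → E.carrierˣ,
        ∃ w : MilnorK (q + 1) E.carrier,
          MilnorSymbol (q + 1) as = (ℓ : ℤ) • w := by
  intro E hE as
  set as' : Fin q → E.carrierˣ := Fin.init as with has'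
  set a : E.carrierˣ := as (Fin.last q) with ha
  have hsnoc : Fin.snoc as' a = as := Fin.snoc_init_self as
  by_cases hpow : ∃ x : E.carrier, x ^ ℓ = (a : E.carrier)
  · -- `a` is an ℓ-th power in `E`
    obtain ⟨x, hx⟩ := hpow
    have hx0 : x ≠ 0 := by
      intro h
      rw [h, zero_pow hℓ.ne_zero] at hx
      exact a.ne_zero hx.symm
    have hcu : (Units.mk0 x hx0) ^ ℓ = a := Units.ext (by simpa using hx)
    refine ⟨MilnorSymbol (q+1) (Fin.snoc as' (Units.mk0 x hx0)), ?_⟩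
    rw [← hsnoc, ← hcu, milnorSymbol_snoc_pow]
  · -- `X^ℓ - a` is irreducible
    push_neg at hpow
    have hirr : Irreducible (Polynomial.X ^ ℓ - Polynomial.C (a : E.carrier)) :=
      X_pow_sub_C_irreducible_of_prime hℓ hpow
    haveI : Fact (Irreducible (Polynomial.X ^ ℓ - Polynomial.C (a : E.carrier))) := ⟨hirr⟩
    set p : Polynomial E.carrier := Polynomial.X ^ ℓ - Polynomial.C (a : E.carrier) with hp
    have hp0 : p ≠ 0 := hirr.ne_zero
    let F : FieldExt E.carrier := ⟨AdjoinRoot p⟩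
    haveI hFfin : FiniteDimensional E.carrier F.carrier :=
      Module.Finite.of_basis (AdjoinRoot.powerBasis hp0).basis
    have hrank : Module.finrank E.carrier F.carrier = ℓ := by
      rw [(AdjoinRoot.powerBasis hp0).finrank, AdjoinRoot.powerBasis_dim, hp,
        Polynomial.natDegree_X_pow_sub_C]
    set b : F.carrier := AdjoinRoot.root p with hb
    have hbl : b ^ ℓ = algebraMap E.carrier F.carrier (a : E.carrier) :=
      root_X_pow_sub_C_pow ℓ (a : E.carrier)
    have hb0 : b ≠ 0 := root_X_pow_sub_C_ne_zero' hℓ.pos a.ne_zero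
    have htop : Algebra.adjoin E.carrier ({b} : Set F.carrier) = ⊤ :=
      AdjoinRoot.adjoinRoot_eq_top
    obtain ⟨z, w, hzw⟩ := hyp E hE F hFfin hrank ⟨a, b, hbl, htop⟩ as'
    -- pair with `a`
    have key := congrArg (pair E.carrier a) hzw
    rw [hpair, hsnoc, map_add, map_zsmul, ← hproj] at key
    have hub : Units.map (algebraMap E.carrier F.carrier).toMonoidHom a
        = (Units.mk0 b hb0) ^ ℓ := Units.ext (by simpa using hbl.symm)
    obtain ⟨y, hy⟩ := pair_pow_aux q F.carrier (pair F.carrier) (hpair F.carrier)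
      (Units.mk0 b hb0) ℓ z
    rw [hub, hy, map_zsmul] at key
    exact ⟨Nq1 E F y + pair E.carrier a w, by rw [key, smul_add]⟩
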